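/- Let G be a connected weighted graph with Fiedler vector v₂ (eigenvector of the second smallest Laplacian eigenvalue λ₂ > 0). Suppose B is a block of G containing only positive entries of v₂, connected to the rest of G through cut vertices i₁,…,i_q with corresponding values v₂(i₁),…,v₂(i_q), and let i* = argmin_k v₂(i_k). Then every vertex j ∈ B satisfies v₂(j) ≥ v₂(i*). -/

import Mathlib

open Matrix SimpleGraph

def lapW {n : ℕ} (W : Matrix (Fin n) (Fin n) ℝ) : Matrix (Fin n) (Fin n) ℝ :=
  Matrix.diagonal (fun i => ∑ j, W i j) - W

def connectedW {n : ℕ} (W : Matrix (Fin n) (Fin n) ℝ) : Prop :=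
  ∀ i j : Fin n, Relation.ReflTransGen (fun a b => W a b ≠ 0) i j

/-- The simple graph underlying the weighted adjacency matrix `W`. -/
def graphOfW {n : ℕ} (W : Matrix (Fin n) (Fin n) ℝ) : SimpleGraph (Fin n) :=
  SimpleGraph.fromRel (fun a b => W a b ≠ 0)

/-- A cut vertex: its removal disconnects the graph. -/
def IsCutVertex {V : Type*} (G : SimpleGraph V) (v : V) : Prop :=
  ¬ (G.induce {u : V | u ≠ v}).Connected

/-- A vertex set inducing a connected subgraph with no cut vertex of itself. -/
def IsBlockCandidate {V : Type*} (G : SimpleGraph V) (B : Set V) : Prop :=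
  (G.induce B).Connected ∧
    ∀ v ∈ B, (B \ {v}).Nonempty → (G.induce (B \ {v})).Connected

/-- A block: a maximal connected induced subgraph without cut vertices. -/
def IsBlock {V : Type*} (G : SimpleGraph V) (B : Set V) : Prop :=
  IsBlockCandidate G B ∧ ∀ B' : Set V, B ⊆ B' → IsBlockCandidate G B' → B' = B

def ReachIn {V : Type*} (G : SimpleGraph V) (s : Set V) (a b : V) : Prop :=
  Relation.ReflTransGen (fun x y => G.Adj x y ∧ x ∈ s ∧ y ∈ s) a b

theorem ReachIn.refl {V : Type*} {G : SimpleGraph V} {s : Set V} {a : V} : ReachIn G s a a :=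
  Relation.ReflTransGen.refl

theorem ReachIn.single {V : Type*} {G : SimpleGraph V} {s : Set V} {a b : V}
    (h : G.Adj a b) (ha : a ∈ s) (hb : b ∈ s) : ReachIn G s a b :=
  Relation.ReflTransGen.single ⟨h, ha, hb⟩

theorem ReachIn.trans {V : Type*} {G : SimpleGraph V} {s : Set V} {a b c : V}
    (h : ReachIn G s a b) (h' : ReachIn G s b c) : ReachIn G s a c :=
  Relation.ReflTransGen.trans h h'

theorem ReachIn.symm {V : Type*} {G : SimpleGraph V} {s : Set V} {a b : V}
    (h : ReachIn G s a b) : ReachIn G s b a := by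
  induction h with
  | refl => exact ReachIn.refl
  | tail _ h2 ih => exact (ReachIn.single h2.1.symm h2.2.2 h2.2.1).trans ih

theorem ReachIn.mono {V : Type*} {G : SimpleGraph V} {s t : Set V} (hst : s ⊆ t) {a b : V}
    (h : ReachIn G s a b) : ReachIn G t a b := by
  induction h with
  | refl => exact ReachIn.refl
  | tail _ h2 ih => exact ih.trans (ReachIn.single h2.1 (hst h2.2.1) (hst h2.2.2))

theorem induce_connected_iff {V : Type*} {G : SimpleGraph V} {s : Set V} :
    (G.induce s).Connected ↔ s.Nonempty ∧ ∀ a ∈ s, ∀ b ∈ s, ReachIn G s a b := by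
  constructor
  · intro h
    refine ⟨⟨(h.nonempty.some : s).1, (h.nonempty.some : s).2⟩, ?_⟩
    intro a ha b hb
    obtain ⟨w⟩ := h.preconnected ⟨a, ha⟩ ⟨b, hb⟩
    clear h
    generalize hu : (⟨a, ha⟩ : s) = u at w
    generalize hv : (⟨b, hb⟩ : s) = v at w
    have : ∀ (x y : s) (_ : (G.induce s).Walk x y), ReachIn G s x.1 y.1 := by
      intro x y p
      induction p with
      | nil => exact ReachIn.refl
      | @cons x y z h p ih => exact (ReachIn.single (G := G) (s := s) (a := x.1) (b := y.1) h x.2 y.2).trans ih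
    subst hu hv
    exact this _ _ w
  · rintro ⟨⟨x, hx⟩, h⟩
    rw [connected_iff]
    refine ⟨fun a b => ?_, ⟨⟨x, hx⟩⟩⟩
    have key : ∀ (c : V), ReachIn G s a.1 c → ∀ hc : c ∈ s, (G.induce s).Reachable a ⟨c, hc⟩ := by
      intro c hr
      induction hr with
      | refl => intro hc; rfl
      | tail h1 h2 ih =>
        intro hc
        exact (ih h2.2.1).trans (SimpleGraph.Adj.reachable (by exact h2.1))
    have := key b.1 (h a.1 a.2 b.1 b.2) b.2
    simpa using this

theorem chain_head_reach {V : Type*} {G : SimpleGraph V} {s : Set V} :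
    ∀ (l : List V) (x : V), List.Chain' G.Adj (x :: l) → (∀ z ∈ x :: l, z ∈ s) →
      ∀ b ∈ x :: l, ReachIn G s x b := by
  intro l
  induction l with
  | nil =>
    intro x _ _ b hb
    simp only [List.mem_singleton] at hb
    subst hb; exact ReachIn.refl
  | cons y ys ih =>
    intro x hc hs b hb
    rcases List.mem_cons.mp hb with hb | hb
    · subst hb; exact ReachIn.refl
    · have hxy : G.Adj x y := (List.isChain_cons_cons.mp hc).1
      have h1 : ReachIn G s x y :=
        ReachIn.single hxy (hs x (by simp)) (hs y (by simp))
      exact h1.trans (ih y (List.isChain_cons_cons.mp hc).2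
        (fun z hz => hs z (List.mem_cons_of_mem _ hz)) b hb)

theorem chain_reach {V : Type*} {G : SimpleGraph V} {s : Set V} {l : List V}
    (hc : List.Chain' G.Adj l) (hs : ∀ z ∈ l, z ∈ s)
    {a b : V} (ha : a ∈ l) (hb : b ∈ l) : ReachIn G s a b := by
  cases l with
  | nil => simp at ha
  | cons x xs =>
    exact (chain_head_reach _ x hc hs a ha).symm.trans (chain_head_reach _ x hc hs b hb)

theorem split_first_mem {V : Type*} (B : Set V) :
    ∀ (l : List V), (∃ x ∈ l, x ∈ B) →
      ∃ P c Q, l = P ++ c :: Q ∧ c ∈ B ∧ ∀ x ∈ P, x ∉ B := by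
  classical
  intro l
  induction l with
  | nil => rintro ⟨x, hx, -⟩; simp at hx
  | cons a t ih =>
    intro hex
    by_cases haB : a ∈ B
    · exact ⟨[], a, t, by simp, haB, by simp⟩
    · obtain ⟨x, hx, hxB⟩ := hex
      have hxt : x ∈ t := by
        rcases List.mem_cons.mp hx with h | h
        · subst h; exact absurd hxB haB
        · exact h
      obtain ⟨P, c, Q, h1, h2, h3⟩ := ih ⟨x, hxt, hxB⟩
      exact ⟨a :: P, c, Q, by simp [h1], h2, by
        intro y hy
        rcases List.mem_cons.mp hy with h | h
        · subst h; exact haB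
        · exact h3 y h⟩
theorem block_closed {V : Type*} {G : SimpleGraph V} {B : Set V}
    (hB : IsBlock G B) {i j : V} (hi : i ∈ B) (hnc : ¬ IsCutVertex G i)
    (hadj : G.Adj i j) : j ∈ B := by
  classical
  by_contra hjB
  have hij : i ≠ j := G.ne_of_adj hadj
  -- basic facts about B
  have hBr : ∀ a ∈ B, ∀ b ∈ B, ReachIn G B a b :=
    (induce_connected_iff.mp hB.1.1).2
  by_cases hb0 : ∃ b ∈ B, b ≠ i
  · -- main case
    obtain ⟨b0, hb0B, hb0i⟩ := hb0
    have hconn' : (G.induce {u : V | u ≠ i}).Connected := not_not.mp hnc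
    obtain ⟨w⟩ := hconn'.preconnected ⟨j, hij.symm⟩ ⟨b0, hb0i⟩
    set p := w.toPath with hp
    have hnd0 : p.1.support.Nodup := p.2.support_nodup
    have hch0 : List.Chain' (G.induce {u : V | u ≠ i}).Adj p.1.support :=
      p.1.isChain_adj_support
    set L0 : List V := p.1.support.map Subtype.val with hL0
    have hndL0 : L0.Nodup := hnd0.map Subtype.val_injective
    have hchL0 : List.Chain' G.Adj L0 := by
      rw [hL0]
      exact List.isChain_map_of_isChain (Subtype.val) (fun a b h => h) hch0
    have hheadL0 : ∃ t, L0 = j :: t := by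
      rw [hL0, p.1.support_eq_cons]
      exact ⟨_, rfl⟩
    have hb0mem : b0 ∈ L0 := by
      rw [hL0]
      exact List.mem_map.mpr ⟨_, p.1.end_mem_support, rfl⟩
    have hneqi : ∀ x ∈ L0, x ≠ i := by
      rw [hL0]
      rintro x hx
      obtain ⟨u, _, rfl⟩ := List.mem_map.mp hx
      exact u.2
    -- split at first vertex of B
    obtain ⟨P, c, Q, hsplit, hcB, hPnB⟩ := split_first_mem B L0 ⟨b0, hb0mem, hb0B⟩
    -- facts about P and c
    have hPL0 : ∀ x ∈ P, x ∈ L0 := by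
      intro x hx; rw [hsplit]; exact List.mem_append_left _ hx
    have hcL0 : c ∈ L0 := by rw [hsplit]; simp
    have hci : c ≠ i := hneqi c hcL0
    have hPi : ∀ x ∈ P, x ≠ i := fun x hx => hneqi x (hPL0 x hx)
    have hjP : j ∈ P := by
      obtain ⟨t, ht⟩ := hheadL0
      rw [ht] at hsplit
      cases P with
      | nil => simp at hsplit; exact absurd hsplit.1 (Ne.symm (by
          intro h; exact hjB (h ▸ hcB)))
      | cons a P' =>
        have : a = j := by
          have := congrArg List.head? hsplit
          simpa using this.symm
        subst this; simp
    have hheadP : ∀ x, P = x :: P.tail → x = j := by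
      intro x hx
      obtain ⟨t, ht⟩ := hheadL0
      rw [ht, hx] at hsplit
      have := congrArg List.head? hsplit
      simpa using this.symm
    have hchPc : List.Chain' G.Adj (P ++ [c]) := by
      have : L0 = (P ++ [c]) ++ Q := by rw [hsplit]; simp
      rw [this] at hchL0
      exact hchL0.left_of_append
    have hndPc : (P ++ [c]).Nodup := by
      have : L0 = (P ++ [c]) ++ Q := by rw [hsplit]; simp
      rw [this] at hndL0
      exact hndL0.of_append_left
    have hchP : List.Chain' G.Adj P := hchPc.left_of_append
    have hcnP : c ∉ P := by
      intro hc
      have := List.disjoint_of_nodup_append hndPc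
      exact this hc (by simp)
    -- the enlarged set
    set B' : Set V := B ∪ {x | x ∈ P} with hB'
    have hBB' : B ⊆ B' := Set.subset_union_left
    have hPB' : ∀ x ∈ P, x ∈ B' := fun x hx => Or.inr hx
    have hiB' : i ∈ B' := hBB' hi
    -- connectivity hub lemma for B'
    have hub : ∀ a ∈ B', ReachIn G B' a i := by
      rintro a (haB | haP)
      · exact (hBr a haB i hi).mono hBB'
      · refine (chain_reach hchP hPB' haP hjP).trans ?_
        exact ReachIn.single hadj.symm (hPB' j hjP) hiB'
    have hcand : IsBlockCandidate G B' := by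
      constructor
      · rw [induce_connected_iff]
        exact ⟨⟨i, hiB'⟩, fun a ha b hb => (hub a ha).trans (hub b hb).symm⟩
      · rintro v (hvB | hvP) hne
        · -- v ∈ B; note v ∉ P
          have hvnP : v ∉ P := fun hvP => hPnB v hvP hvB
          have hBvne : (B \ {v}).Nonempty := by
            by_cases hvi : v = i
            · exact ⟨b0, hb0B, by simp [hvi, hb0i]⟩
            · exact ⟨i, hi, by simp [Ne.symm hvi]⟩
          have hBvr : ∀ a ∈ B \ {v}, ∀ b ∈ B \ {v}, ReachIn G (B \ {v}) a b :=
            (induce_connected_iff.mp (hB.1.2 v hvB hBvne)).2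
          have hsub : B \ {v} ⊆ B' \ {v} := fun x hx => ⟨hBB' hx.1, hx.2⟩
          have hPsub : ∀ x ∈ P, x ∈ B' \ {v} := by
            intro x hx
            exact ⟨hPB' x hx, by simp; rintro rfl; exact hvnP hx⟩
          set w0 : V := if v = i then c else i with hw0
          have hw0B : w0 ∈ B \ {v} := by
            rw [hw0]; split
            · rename_i h; exact ⟨hcB, by simp [h]; exact hci⟩
            · rename_i h; exact ⟨hi, by simp [Ne.symm h]⟩
          have hub2 : ∀ a ∈ B' \ {v}, ReachIn G (B' \ {v}) a w0 := by
            rintro a ⟨haB | haP, hav⟩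
            · exact (hBvr a ⟨haB, hav⟩ w0 hw0B).mono hsub
            · by_cases hvi : v = i
              · -- go to c
                have hc1 : List.Chain' G.Adj P ∧ _ := List.isChain_append.mp hchPc
                have hPne : P ≠ [] := by intro h; rw [h] at haP; simp at haP
                have hlast : P.getLast hPne ∈ P := List.getLast_mem hPne
                have hadjlc : G.Adj (P.getLast hPne) c := by
                  refine hc1.2.2 _ ?_ c ?_
                  · rw [List.getLast?_eq_getLast hPne]; simp
                  · simp
                refine (chain_reach hchP hPsub haP hlast).trans ?_
                refine (ReachIn.single hadjlc (hPsub _ hlast) ⟨hBB' hcB, by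
                  simp [hvi]; exact hci⟩).trans ?_
                rw [hw0]; simp only [hvi, if_true]; exact ReachIn.refl
              · -- go to i directly
                refine (chain_reach hchP hPsub haP hjP).trans ?_
                refine (ReachIn.single hadj.symm (hPsub j hjP) ⟨hiB', by
                  simp [Ne.symm hvi]⟩).trans ?_
                rw [hw0]; simp only [hvi, if_false]; exact ReachIn.refl
          rw [induce_connected_iff]
          refine ⟨⟨w0, hsub hw0B⟩, fun a ha b hb => (hub2 a ha).trans (hub2 b hb).symm⟩
        · -- v ∈ P
          have hvB : v ∉ B := hPnB v hvP
          have hvi : v ≠ i := hPi v hvP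
          have hvc : v ≠ c := by rintro rfl; exact hcnP hvP
          obtain ⟨P1, P2, hPsplit⟩ := List.append_of_mem hvP
          have hndP : P.Nodup := hndPc.of_append_left
          have hvP1 : v ∉ P1 := by
            rw [hPsplit] at hndP
            have := List.disjoint_of_nodup_append hndP
            intro h; exact (List.nodup_append'.mp hndP).2.2 h (by simp)
          have hvP2 : v ∉ P2 := by
            rw [hPsplit] at hndP
            have := (List.nodup_append.mp hndP).2.1
            simp at this
            exact this.1
          have hBsub : B ⊆ B' \ {v} := fun x hx => ⟨hBB' hx, by simp; rintro rfl; exact hvB hx⟩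
          have hub3 : ∀ a ∈ B' \ {v}, ReachIn G (B' \ {v}) a i := by
            rintro a ⟨haB | haP, hav⟩
            · exact (hBr a haB i hi).mono hBsub
            · have hav' : a ≠ v := by simpa using hav
              have haP12 : a ∈ P1 ∨ a ∈ P2 := by
                rw [hPsplit] at haP
                rcases List.mem_append.mp haP with h | h
                · exact Or.inl h
                · rcases List.mem_cons.mp h with h | h
                  · exact absurd h hav'
                  · exact Or.inr h
              rcases haP12 with haP1 | haP2
              · -- through j
                have hP1ne : P1 ≠ [] := by intro h; rw [h] at haP1; simp at haP1
                have hchP1 : List.Chain' G.Adj P1 := by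
                  rw [hPsplit] at hchP; exact hchP.left_of_append
                have hP1sub : ∀ x ∈ P1, x ∈ B' \ {v} := by
                  intro x hx
                  refine ⟨hPB' x (by rw [hPsplit]; exact List.mem_append_left _ hx), ?_⟩
                  simp; rintro rfl; exact hvP1 hx
                have hjP1 : j ∈ P1 := by
                  obtain ⟨a1, t1, ht1⟩ := List.exists_cons_of_ne_nil hP1ne
                  have : a1 = j := by
                    apply hheadP
                    rw [hPsplit, ht1]; rfl
                  rw [ht1, this]; simp
                refine (chain_reach hchP1 hP1sub haP1 hjP1).trans ?_
                exact ReachIn.single hadj.symm (hP1sub j hjP1) ⟨hiB', by simp [Ne.symm hvi]⟩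
              · -- through c
                have hchP2c : List.Chain' G.Adj (P2 ++ [c]) := by
                  have : P ++ [c] = P1 ++ v :: (P2 ++ [c]) := by rw [hPsplit]; simp
                  rw [this] at hchPc
                  exact hchPc.right_of_append.tail
                have hP2sub : ∀ x ∈ P2 ++ [c], x ∈ B' \ {v} := by
                  intro x hx
                  rcases List.mem_append.mp hx with h | h
                  · refine ⟨hPB' x (by rw [hPsplit]; simp [h]), ?_⟩
                    simp; rintro rfl; exact hvP2 h
                  · simp at h; subst h
                    exact ⟨hBB' hcB, by simp [Ne.symm hvc]⟩
                refine (chain_reach hchP2c hP2sub (a := a) (b := c) (List.mem_append_left _ haP2) (List.mem_append_right _ (List.mem_singleton_self c))).trans ?_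
                exact (hBr c hcB i hi).mono hBsub
          rw [induce_connected_iff]
          refine ⟨⟨i, ⟨hiB', by simp [Ne.symm hvi]⟩⟩,
            fun a ha b hb => (hub3 a ha).trans (hub3 b hb).symm⟩
    have := hB.2 B' hBB' hcand
    rw [← this] at hjB
    exact hjB (Or.inr hjP)
  · -- degenerate case: B = {i}
    push_neg at hb0
    set B' : Set V := {i, j} with hB'
    have hBB' : B ⊆ B' := by intro x hx; left; exact hb0 x hx
    have hcand : IsBlockCandidate G B' := by
      constructor
      · rw [induce_connected_iff]
        refine ⟨⟨i, Or.inl rfl⟩, ?_⟩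
        have hr : ReachIn G B' i j := ReachIn.single hadj (Or.inl rfl) (Or.inr rfl)
        rintro a (rfl | rfl) b (rfl | rfl)
        · exact ReachIn.refl
        · exact hr
        · exact hr.symm
        · exact ReachIn.refl
      · intro v hv hne
        rw [induce_connected_iff]
        refine ⟨hne, ?_⟩
        have key : ∀ a ∈ B' \ {v}, ∀ b ∈ B' \ {v}, a = b := by
          rintro a ⟨(rfl | rfl), hav⟩ b ⟨(rfl | rfl), hbv⟩ <;>
            rcases hv with rfl | rfl <;> simp_all
        intro a ha b hb
        rw [key a ha b hb]
        exact ReachIn.refl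
    have := hB.2 B' hBB' hcand
    rw [← this] at hjB
    exact hjB (Or.inr rfl)


/-- monotonicity of the Fiedler vector within a positive block.
If `B` is a block all of whose vertices carry strictly positive Fiedler
entries, and `i*` is the cut vertex of `G` lying in `B` with minimal Fiedler
entry among the cut vertices in `B`, then every vertex of `B` has Fiedler
entry at least `v₂ i*`. -/
theorem fiedler_monotone_in_positive_block
    {n : ℕ} (W : Matrix (Fin n) (Fin n) ℝ)
    (hsym : W.IsSymm) (hnonneg : ∀ i j, 0 ≤ W i j)
    (hconn : connectedW W)
    (lam2 : ℝ) (hlam2pos : 0 < lam2)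
    (hlam2 : IsLeast {μ : ℝ | μ ≠ 0 ∧ ∃ w : Fin n → ℝ, w ≠ 0 ∧
      (lapW W).mulVec w = μ • w} lam2)
    (v2 : Fin n → ℝ) (hv2 : v2 ≠ 0)
    (hev : (lapW W).mulVec v2 = lam2 • v2)
    (B : Set (Fin n)) (hB : IsBlock (graphOfW W) B)
    -- B is a positive block
    (hpos : ∀ i ∈ B, 0 < v2 i)
    (istar : Fin n) (histar : istar ∈ B) (hcut : IsCutVertex (graphOfW W) istar)
    -- i* minimizes v₂ among the cut vertices contained in B
    (hmincut : ∀ c ∈ B, IsCutVertex (graphOfW W) c → v2 istar ≤ v2 c) :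
    ∀ j ∈ B, v2 istar ≤ v2 j := by
  classical
  by_contra hcon
  push_neg at hcon
  obtain ⟨j0, hj0B, hj0⟩ := hcon
  set S : Finset (Fin n) := Finset.univ.filter (fun x => x ∈ B ∧ v2 x < v2 istar) with hS
  have hSne : S.Nonempty := ⟨j0, by simp [hS, hj0B, hj0]⟩
  have hSB : ∀ x ∈ S, x ∈ B ∧ v2 x < v2 istar := by
    intro x hx; simpa [hS] using hx
  have hSm : ∀ x, x ∈ B → v2 x < v2 istar → x ∈ S := by
    intro x h1 h2; simp [hS, h1, h2]
  -- eigen-equation rows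
  have hrow : ∀ i, ∑ k, W i k * (v2 i - v2 k) = lam2 * v2 i := by
    intro i
    have h0 : ∑ k, (lapW W) i k * v2 k = lam2 * v2 i := by
      have := congrFun hev i
      simpa [Matrix.mulVec, dotProduct] using this
    have h1 : ∀ k, (lapW W) i k = (if i = k then (∑ j, W i j) else 0) - W i k := by
      intro k; simp [lapW, Matrix.diagonal, Matrix.sub_apply, Matrix.of_apply]
    calc ∑ k, W i k * (v2 i - v2 k)
        = ∑ k, (W i k * v2 i - W i k * v2 k) := by
          refine Finset.sum_congr rfl fun k _ => by ring
      _ = (∑ k, W i k) * v2 i - ∑ k, W i k * v2 k := by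
          rw [Finset.sum_sub_distrib, Finset.sum_mul]
      _ = ∑ k, (lapW W) i k * v2 k := by
          simp only [h1, sub_mul, Finset.sum_sub_distrib]
          congr 1
          simp only [ite_mul, zero_mul, Finset.sum_ite_eq, Finset.mem_univ, if_true]
      _ = lam2 * v2 i := h0
  -- sum over S
  have hsum : lam2 * ∑ i ∈ S, v2 i = ∑ i ∈ S, ∑ k, W i k * (v2 i - v2 k) := by
    rw [Finset.mul_sum]
    exact Finset.sum_congr rfl fun i _ => (hrow i).symm
  -- split inner sums
  have hsplit : ∀ i ∈ S, ∑ k, W i k * (v2 i - v2 k) =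
      (∑ k ∈ S, W i k * (v2 i - v2 k)) + ∑ k ∈ Sᶜ, W i k * (v2 i - v2 k) := by
    intro i _
    rw [Finset.sum_add_sum_compl]
  -- diagonal block vanishes
  have hT : ∑ i ∈ S, ∑ k ∈ S, W i k * (v2 i - v2 k) = 0 := by
    have h2 : (∑ i ∈ S, ∑ k ∈ S, W i k * (v2 i - v2 k)) +
        (∑ i ∈ S, ∑ k ∈ S, W i k * (v2 i - v2 k)) = 0 := by
      nth_rewrite 2 [Finset.sum_comm]
      rw [← Finset.sum_add_distrib]
      refine Finset.sum_eq_zero fun i _ => ?_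
      rw [← Finset.sum_add_distrib]
      refine Finset.sum_eq_zero fun k _ => ?_
      have : W k i = W i k := by
        have := congrFun (congrFun hsym i) k
        simpa [Matrix.transpose_apply] using this
      rw [this]; ring
    linarith
  -- off-block is nonpositive
  have hoff : ∑ i ∈ S, ∑ k ∈ Sᶜ, W i k * (v2 i - v2 k) ≤ 0 := by
    refine Finset.sum_nonpos fun i hi => Finset.sum_nonpos fun k hk => ?_
    by_cases hWik : W i k = 0
    · simp [hWik]
    · obtain ⟨hiB, hilt⟩ := hSB i hi
      have hknS : k ∉ S := Finset.mem_compl.mp hk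
      have hki : k ≠ i := fun h => hknS (h ▸ hi)
      have hadj : (graphOfW W).Adj i k := by
        rw [graphOfW, SimpleGraph.fromRel_adj]
        exact ⟨Ne.symm hki, Or.inl hWik⟩
      have hinc : ¬ IsCutVertex (graphOfW W) i := by
        intro h
        exact absurd (hmincut i hiB h) (not_le.mpr hilt)
      have hkB : k ∈ B := block_closed hB hiB hinc hadj
      have hkge : v2 istar ≤ v2 k := by
        by_contra h
        exact hknS (hSm k hkB (not_le.mp h))
      exact mul_nonpos_of_nonneg_of_nonpos (hnonneg i k) (by linarith)
  have hLHS : 0 < lam2 * ∑ i ∈ S, v2 i :=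
    mul_pos hlam2pos (Finset.sum_pos (fun i hi => hpos i (hSB i hi).1) hSne)
  rw [hsum, Finset.sum_congr rfl hsplit, Finset.sum_add_distrib, hT, zero_add] at hLHS
  linarith
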